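/- Every nonempty partition diagram π admits a unique decomposition π = θ⁽¹⁾ • θ⁽²⁾ • ··· • θ⁽ᵐ⁾ into nonempty •-irreducible partition diagrams. -/
import Mathlib


open Finset

/-- A partition diagram of order `k`: a set partition (equivalence relation) on the
`2k`-element set `Fin k × Bool`, where `(i, true)` denotes the top node `i+1` and
`(i, false)` denotes the bottom node `(i+1)'`. -/
abbrev DiagramOn (k : ℕ) := Setoid (Fin k × Bool)

/-- A partition diagram of arbitrary order. -/
abbrev Diagram := Σ k : ℕ, DiagramOn k

/-- The disjoint sum of two set partitions. -/
def sumSetoid {α β : Type*} (s : Setoid α) (t : Setoid β) : Setoid (α ⊕ β) where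
  r x y :=
    match x, y with
    | .inl a, .inl b => s.r a b
    | .inr a, .inr b => t.r a b
    | _, _ => False
  iseqv := by
    refine ⟨?_, ?_, ?_⟩
    · rintro (a | a)
      · exact s.iseqv.refl a
      · exact t.iseqv.refl a
    · rintro (a | a) (b | b) h
      · exact s.iseqv.symm h
      · exact h.elim
      · exact h.elim
      · exact t.iseqv.symm h
    · rintro (a | a) (b | b) (c | c) h₁ h₂ <;>
        first
          | exact s.iseqv.trans h₁ h₂
          | exact t.iseqv.trans h₁ h₂
          | exact h₁.elim
          | exact h₂.elim

/-- The relabeling identifying the nodes of two concatenated diagrams of orders `j`, `m`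
with the nodes of a diagram of order `j + m`. -/
def concatEquiv (j m : ℕ) : (Fin j × Bool) ⊕ (Fin m × Bool) ≃ Fin (j + m) × Bool :=
  (Equiv.sumProdDistrib (Fin j) (Fin m) Bool).symm.trans
    (Equiv.prodCongr finSumFinEquiv (Equiv.refl Bool))

/-- Horizontal concatenation of partition diagrams. -/
def concatOn {j m : ℕ} (s : DiagramOn j) (t : DiagramOn m) : DiagramOn (j + m) :=
  Setoid.comap (concatEquiv j m).symm (sumSetoid s t)

/-- Horizontal concatenation `⊗` of diagrams of arbitrary orders. -/
def Diagram.concat (d₁ d₂ : Diagram) : Diagram :=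
  ⟨d₁.1 + d₂.1, concatOn d₁.2 d₂.2⟩

/-- A nonempty diagram is `⊗`-irreducible if it is not the concatenation of two
nonempty diagrams. -/
def Diagram.Irr (d : Diagram) : Prop :=
  d.1 ≠ 0 ∧ ¬ ∃ d₁ d₂ : Diagram, d₁.1 ≠ 0 ∧ d₂.1 ≠ 0 ∧ d = d₁.concat d₂

/-- The Bell number: the number of set partitions of an `m`-element set. -/
noncomputable def bell (m : ℕ) : ℕ := Nat.card (Setoid (Fin m))

/-- The smallest equivalence relation containing `s` and relating `a` with `b`
(merging the blocks of `a` and `b`). -/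
def joinTwo {X : Type*} (s : Setoid X) (a b : X) : Setoid X :=
  s ⊔ Relation.EqvGen.setoid (fun x y => x = a ∧ y = b)

/-- The near-concatenation `•` of partition diagrams: concatenate, then merge the block
of the bottom-right node of the first diagram with the block of the bottom-left node of
the second diagram.  By convention `∅ • ρ = ρ` and `π • ∅ = π`. -/
def Diagram.bullet (d₁ d₂ : Diagram) : Diagram :=
  if h₁ : d₁.1 = 0 then d₂
  else if h₂ : d₂.1 = 0 then d₁
  else ⟨d₁.1 + d₂.1,
    joinTwo (concatOn d₁.2 d₂.2)
      (⟨d₁.1 - 1, by omega⟩, false) (⟨d₁.1, by omega⟩, false)⟩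

/-- The `⊗`-product of a list of diagrams (empty diagram for the empty list). -/
def Diagram.listConcat : List Diagram → Diagram
  | [] => ⟨0, ⊥⟩
  | d :: l => l.foldl Diagram.concat d

/-- The `•`-product of a list of diagrams (empty diagram for the empty list). -/
def Diagram.listBullet : List Diagram → Diagram
  | [] => ⟨0, ⊥⟩
  | d :: l => l.foldl Diagram.bullet d

/-- The number of `⊗`-irreducible partition diagrams of order `k`. -/
noncomputable def irrCount (k : ℕ) : ℕ := Nat.card {s : DiagramOn k // Diagram.Irr ⟨k, s⟩}

/-- A nonempty diagram is `•`-irreducible if it is not a `•`-product of two nonempty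
diagrams. -/
def Diagram.BulletIrr (d : Diagram) : Prop :=
  d.1 ≠ 0 ∧ ¬ ∃ d₁ d₂ : Diagram, d₁.1 ≠ 0 ∧ d₂.1 ≠ 0 ∧ d = d₁.bullet d₂


section Aux

/-! ### Auxiliary machinery for the factorization theorem -/

/-- The relation obtained by merging the classes of `a` and `b` in `s`, described
explicitly. -/
private def joinRel {X : Type*} (s : Setoid X) (a b : X) : Setoid X where
  r x y := s.r x y ∨ (s.r x a ∧ s.r b y) ∨ (s.r x b ∧ s.r a y)
  iseqv := by
    refine ⟨fun x => Or.inl (s.refl x), ?_, ?_⟩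
    · rintro x y (h | ⟨h1, h2⟩ | ⟨h1, h2⟩)
      · exact Or.inl (s.symm h)
      · exact Or.inr (Or.inr ⟨s.symm h2, s.symm h1⟩)
      · exact Or.inr (Or.inl ⟨s.symm h2, s.symm h1⟩)
    · rintro x y z (h | ⟨h1, h2⟩ | ⟨h1, h2⟩) (g | ⟨g1, g2⟩ | ⟨g1, g2⟩)
      · exact Or.inl (s.trans h g)
      · exact Or.inr (Or.inl ⟨s.trans h g1, g2⟩)
      · exact Or.inr (Or.inr ⟨s.trans h g1, g2⟩)
      · exact Or.inr (Or.inl ⟨h1, s.trans h2 g⟩)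
      · exact Or.inl (s.trans h1 (s.trans (s.symm (s.trans h2 g1)) g2))
      · exact Or.inl (s.trans h1 g2)
      · exact Or.inr (Or.inr ⟨h1, s.trans h2 g⟩)
      · exact Or.inl (s.trans h1 g2)
      · exact Or.inl (s.trans h1 (s.trans (s.symm (s.trans h2 g1)) g2))

theorem joinTwo_r {X : Type*} (s : Setoid X) (a b x y : X) :
    (joinTwo s a b).r x y ↔ s.r x y ∨ (s.r x a ∧ s.r b y) ∨ (s.r x b ∧ s.r a y) := by
  constructor
  · intro h
    have hle : joinTwo s a b ≤ joinRel s a b := by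
      refine sup_le (fun x y h => Or.inl h) (Setoid.eqvGen_le ?_)
      rintro x y ⟨rfl, rfl⟩
      exact Or.inr (Or.inl ⟨s.refl _, s.refl _⟩)
    exact hle h
  · have hs : s ≤ joinTwo s a b := le_sup_left
    have hab : (joinTwo s a b).r a b := by
      have h2 : Relation.EqvGen.setoid (fun x y => x = a ∧ y = b) ≤ joinTwo s a b :=
        le_sup_right
      exact h2 (Relation.EqvGen.rel a b ⟨rfl, rfl⟩)
    rintro (h | ⟨h1, h2⟩ | ⟨h1, h2⟩)
    · exact hs h
    · exact (joinTwo s a b).trans (hs h1) ((joinTwo s a b).trans hab (hs h2))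
    · exact (joinTwo s a b).trans (hs h1)
        ((joinTwo s a b).trans ((joinTwo s a b).symm hab) (hs h2))

end Aux

section Aux2

variable {j m : ℕ}

/-- Left embedding of nodes. -/
def emL (j m : ℕ) (a : Fin j × Bool) : Fin (j + m) × Bool :=
  ((⟨a.1.val, by have := a.1.2; omega⟩ : Fin (j + m)), a.2)

/-- Right embedding of nodes. -/
def emR (j m : ℕ) (a : Fin m × Bool) : Fin (j + m) × Bool :=
  ((⟨j + a.1.val, by have := a.1.2; omega⟩ : Fin (j + m)), a.2)

theorem concatEquiv_inl (a : Fin j × Bool) :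
    concatEquiv j m (.inl a) = emL j m a := by
  obtain ⟨a1, a2⟩ := a
  simp only [concatEquiv, Equiv.trans_apply, Equiv.sumProdDistrib,
    Equiv.coe_fn_mk, Equiv.prodCongr_apply, Prod.map, finSumFinEquiv_apply_left, emL]
  exact Prod.ext (Fin.ext rfl) rfl

theorem concatEquiv_inr (a : Fin m × Bool) :
    concatEquiv j m (.inr a) = emR j m a := by
  obtain ⟨a1, a2⟩ := a
  simp only [concatEquiv, Equiv.trans_apply, Equiv.sumProdDistrib,
    Equiv.coe_fn_mk, Equiv.prodCongr_apply, Prod.map, finSumFinEquiv_apply_right, emR]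
  exact Prod.ext (Fin.ext rfl) rfl

theorem concatEquiv_symm_emL (a : Fin j × Bool) :
    (concatEquiv j m).symm (emL j m a) = .inl a := by
  rw [Equiv.symm_apply_eq, concatEquiv_inl]

theorem concatEquiv_symm_emR (a : Fin m × Bool) :
    (concatEquiv j m).symm (emR j m a) = .inr a := by
  rw [Equiv.symm_apply_eq, concatEquiv_inr]

theorem concat_LL (d₁ : DiagramOn j) (d₂ : DiagramOn m) (a b : Fin j × Bool) :
    (concatOn d₁ d₂).r (emL j m a) (emL j m b) ↔ d₁.r a b := by
  show (sumSetoid d₁ d₂).r ((concatEquiv j m).symm (emL j m a))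
    ((concatEquiv j m).symm (emL j m b)) ↔ _
  rw [concatEquiv_symm_emL, concatEquiv_symm_emL]
  exact Iff.rfl

theorem concat_RR (d₁ : DiagramOn j) (d₂ : DiagramOn m) (a b : Fin m × Bool) :
    (concatOn d₁ d₂).r (emR j m a) (emR j m b) ↔ d₂.r a b := by
  show (sumSetoid d₁ d₂).r ((concatEquiv j m).symm (emR j m a))
    ((concatEquiv j m).symm (emR j m b)) ↔ _
  rw [concatEquiv_symm_emR, concatEquiv_symm_emR]
  exact Iff.rfl

theorem concat_LR (d₁ : DiagramOn j) (d₂ : DiagramOn m) (a : Fin j × Bool)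
    (b : Fin m × Bool) :
    (concatOn d₁ d₂).r (emL j m a) (emR j m b) ↔ False := by
  show (sumSetoid d₁ d₂).r ((concatEquiv j m).symm (emL j m a))
    ((concatEquiv j m).symm (emR j m b)) ↔ _
  rw [concatEquiv_symm_emL, concatEquiv_symm_emR]
  exact Iff.rfl

theorem concat_RL (d₁ : DiagramOn j) (d₂ : DiagramOn m) (a : Fin m × Bool)
    (b : Fin j × Bool) :
    (concatOn d₁ d₂).r (emR j m a) (emL j m b) ↔ False := by
  show (sumSetoid d₁ d₂).r ((concatEquiv j m).symm (emR j m a))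
    ((concatEquiv j m).symm (emL j m b)) ↔ _
  rw [concatEquiv_symm_emR, concatEquiv_symm_emL]
  exact Iff.rfl

theorem node_cases (x : Fin (j + m) × Bool) :
    (∃ a, x = emL j m a) ∨ (∃ a, x = emR j m a) := by
  rcases lt_or_ge x.1.val j with h | h
  · exact Or.inl ⟨((⟨x.1.val, h⟩ : Fin j), x.2), rfl⟩
  · refine Or.inr ⟨((⟨x.1.val - j, by have := x.1.2; omega⟩ : Fin m), x.2), ?_⟩
    exact Prod.ext (Fin.ext (by simp [emR]; omega)) rfl

end Aux2

section Aux3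

variable {j m k : ℕ}

/-- The merged setoid underlying the bullet product. -/
def bulSet (d₁ : DiagramOn j) (d₂ : DiagramOn m) (hj : j ≠ 0) (hm : m ≠ 0) :
    DiagramOn (j + m) :=
  joinTwo (concatOn d₁ d₂) ((⟨j - 1, by omega⟩ : Fin (j + m)), false)
    ((⟨j, by omega⟩ : Fin (j + m)), false)

theorem bul_LL {d₁ : DiagramOn j} {d₂ : DiagramOn m} (hj : j ≠ 0) (hm : m ≠ 0)
    (a b : Fin j × Bool) :
    (bulSet d₁ d₂ hj hm).r (emL j m a) (emL j m b) ↔ d₁.r a b := by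
  have hp : ((⟨j - 1, by omega⟩ : Fin (j + m)), false) =
      emL j m ((⟨j - 1, by omega⟩ : Fin j), false) := rfl
  have hq : ((⟨j, by omega⟩ : Fin (j + m)), false) =
      emR j m ((⟨0, by omega⟩ : Fin m), false) := by
    exact Prod.ext (Fin.ext (by simp [emR])) rfl
  rw [bulSet, joinTwo_r, hp, hq]
  simp only [concat_LL, concat_RR, concat_LR, concat_RL]
  tauto

theorem bul_RR {d₁ : DiagramOn j} {d₂ : DiagramOn m} (hj : j ≠ 0) (hm : m ≠ 0)
    (a b : Fin m × Bool) :
    (bulSet d₁ d₂ hj hm).r (emR j m a) (emR j m b) ↔ d₂.r a b := by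
  have hp : ((⟨j - 1, by omega⟩ : Fin (j + m)), false) =
      emL j m ((⟨j - 1, by omega⟩ : Fin j), false) := rfl
  have hq : ((⟨j, by omega⟩ : Fin (j + m)), false) =
      emR j m ((⟨0, by omega⟩ : Fin m), false) := by
    exact Prod.ext (Fin.ext (by simp [emR])) rfl
  rw [bulSet, joinTwo_r, hp, hq]
  simp only [concat_LL, concat_RR, concat_LR, concat_RL]
  tauto

theorem bul_LR {d₁ : DiagramOn j} {d₂ : DiagramOn m} (hj : j ≠ 0) (hm : m ≠ 0)
    (a : Fin j × Bool) (b : Fin m × Bool) :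
    (bulSet d₁ d₂ hj hm).r (emL j m a) (emR j m b) ↔
      d₁.r a ((⟨j - 1, by omega⟩ : Fin j), false) ∧
      d₂.r ((⟨0, by omega⟩ : Fin m), false) b := by
  have hp : ((⟨j - 1, by omega⟩ : Fin (j + m)), false) =
      emL j m ((⟨j - 1, by omega⟩ : Fin j), false) := rfl
  have hq : ((⟨j, by omega⟩ : Fin (j + m)), false) =
      emR j m ((⟨0, by omega⟩ : Fin m), false) := by
    exact Prod.ext (Fin.ext (by simp [emR])) rfl
  rw [bulSet, joinTwo_r, hp, hq]
  simp only [concat_LL, concat_RR, concat_LR, concat_RL]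
  tauto

/-- `π` splits at position `c`: the nodes `c` and `c+1'` (0-indexed: `c-1` and `c`
on the bottom row) are related, and every relation crossing the cut factors through
the node `c-1`. -/
def SplitsAt {k : ℕ} (π : DiagramOn k) (c : ℕ) : Prop :=
  ∃ (h1 : 0 < c) (h2 : c < k),
    π.r ((⟨c - 1, by omega⟩ : Fin k), false) ((⟨c, h2⟩ : Fin k), false) ∧
    ∀ x y : Fin k × Bool, x.1.val < c → c ≤ y.1.val → π.r x y →
      π.r x ((⟨c - 1, by omega⟩ : Fin k), false)

/-- Restriction of a diagram to the first `c` columns. -/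
def lres {k : ℕ} (π : DiagramOn k) (c : ℕ) (h : c ≤ k) : DiagramOn c :=
  Setoid.comap (fun x => ((⟨x.1.val, lt_of_lt_of_le x.1.2 h⟩ : Fin k), x.2)) π

/-- Restriction of a diagram to the last `k - c` columns. -/
def rres {k : ℕ} (π : DiagramOn k) (c : ℕ) (h : c ≤ k) : DiagramOn (k - c) :=
  Setoid.comap (fun x => ((⟨c + x.1.val, by have := x.1.2; omega⟩ : Fin k), x.2)) π

theorem diagram_eq {n n' : ℕ} (h : n = n') (s : DiagramOn n) (t : DiagramOn n')
    (hr : ∀ x y : Fin n × Bool,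
      s.r x y ↔ t.r ((⟨x.1.val, h ▸ x.1.2⟩ : Fin n'), x.2)
        ((⟨y.1.val, h ▸ y.1.2⟩ : Fin n'), y.2)) :
    (⟨n, s⟩ : Diagram) = ⟨n', t⟩ := by
  subst h
  exact congrArg _ (Setoid.ext fun x y => hr x y)

end Aux3

section Aux4

variable {j m k : ℕ}

theorem bullet_mk (hj : j ≠ 0) (hm : m ≠ 0) (d₁ : DiagramOn j) (d₂ : DiagramOn m) :
    Diagram.bullet ⟨j, d₁⟩ ⟨m, d₂⟩ = ⟨j + m, bulSet d₁ d₂ hj hm⟩ := by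
  rw [Diagram.bullet]
  rw [dif_neg hj, dif_neg hm]
  rfl

theorem lres_r (π : DiagramOn k) (c : ℕ) (h : c ≤ k) (a b : Fin c × Bool) :
    (lres π c h).r a b ↔
      π.r ((⟨a.1.val, by have := a.1.2; omega⟩ : Fin k), a.2)
        ((⟨b.1.val, by have := b.1.2; omega⟩ : Fin k), b.2) := Iff.rfl

theorem rres_r (π : DiagramOn k) (c : ℕ) (h : c ≤ k) (a b : Fin (k - c) × Bool) :
    (rres π c h).r a b ↔
      π.r ((⟨c + a.1.val, by have := a.1.2; omega⟩ : Fin k), a.2)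
        ((⟨c + b.1.val, by have := b.1.2; omega⟩ : Fin k), b.2) := Iff.rfl

/-- CENT2: if `π` is a bullet product, then it splits at `j` and the factors are
the two restrictions. -/
theorem bullet_eq_core (hj : j ≠ 0) (hm : m ≠ 0) (d₁ : DiagramOn j) (d₂ : DiagramOn m)
    (π : DiagramOn (j + m)) (hπ : Diagram.bullet ⟨j, d₁⟩ ⟨m, d₂⟩ = ⟨j + m, π⟩) :
    SplitsAt π j ∧ (⟨j, d₁⟩ : Diagram) = ⟨j, lres π j (by omega)⟩ ∧
      (⟨m, d₂⟩ : Diagram) = ⟨j + m - j, rres π j (by omega)⟩ := by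
  have hB : bulSet d₁ d₂ hj hm = π := by
    have h2 := (bullet_mk hj hm d₁ d₂).symm.trans hπ
    simpa using h2
  subst hB
  set B := bulSet d₁ d₂ hj hm with hBdef
  refine ⟨⟨Nat.pos_of_ne_zero hj, by omega, ?_, ?_⟩, ?_, ?_⟩
  · -- B.r (j-1, false) (j, false)
    exact (bul_LR hj hm ((⟨j - 1, by omega⟩ : Fin j), false) ((⟨0, by omega⟩ : Fin m), false)).mpr
      ⟨d₁.refl _, d₂.refl _⟩
  · -- crossing condition
    intro x y hx hy hxy
    have hyv := y.1.2
    set a : Fin j × Bool := ((⟨x.1.val, hx⟩ : Fin j), x.2) with ha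
    set b : Fin m × Bool := ((⟨y.1.val - j, by omega⟩ : Fin m), y.2) with hb
    have hyE : y = emR j m b := Prod.ext (Fin.ext (by simp [emR, hb]; omega)) rfl
    rw [hyE] at hxy
    have h1 := ((bul_LR hj hm a b).mp hxy).1
    exact (bul_LL hj hm a ((⟨j - 1, by omega⟩ : Fin j), false)).mpr h1
  · -- d₁ = lres
    refine diagram_eq rfl _ _ (fun a b => ?_)
    exact (bul_LL hj hm a b).symm
  · -- d₂ = rres
    refine diagram_eq (by omega) _ _ (fun a b => ?_)
    exact (bul_RR hj hm a b).symm

/-- CENT1: if `π` splits at `c`, it is the bullet product of its restrictions. -/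
theorem splits_bullet (π : DiagramOn k) (c : ℕ) (hck : c ≤ k) (hs : SplitsAt π c) :
    (⟨k, π⟩ : Diagram) =
      Diagram.bullet ⟨c, lres π c hck⟩ ⟨k - c, rres π c hck⟩ := by
  obtain ⟨h1, h2, hpq, hcr⟩ := hs
  rw [bullet_mk (by omega) (by omega)]
  set B := bulSet (lres π c hck) (rres π c hck) (by omega) (by omega) with hBdef
  have key : ∀ x y : Fin k × Bool, x.1.val < c → c ≤ y.1.val →
      (π.r x y ↔ π.r x ((⟨c - 1, by omega⟩ : Fin k), false) ∧
        π.r ((⟨c, h2⟩ : Fin k), false) y) := by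
    intro x y hx hy
    constructor
    · intro hxy
      refine ⟨hcr x y hx hy hxy, ?_⟩
      exact π.trans (π.symm hpq) (π.trans (π.symm (hcr x y hx hy hxy)) hxy)
    · rintro ⟨hA, hC⟩
      exact π.trans hA (π.trans hpq hC)
  refine diagram_eq (by omega) _ _ (fun x y => ?_)
  rcases lt_or_ge x.1.val c with hx | hx <;> rcases lt_or_ge y.1.val c with hy | hy
  · -- LL
    set a : Fin c × Bool := ((⟨x.1.val, hx⟩ : Fin c), x.2)
    set b : Fin c × Bool := ((⟨y.1.val, hy⟩ : Fin c), y.2)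
    exact (bul_LL (d₁ := lres π c hck) (d₂ := rres π c hck)
      (by omega) (by omega) a b).symm
  · -- LR
    have hxv := x.1.2
    have hyv := y.1.2
    set a : Fin c × Bool := ((⟨x.1.val, hx⟩ : Fin c), x.2) with hadef
    set b : Fin (k - c) × Bool := ((⟨y.1.val - c, by omega⟩ : Fin (k - c)), y.2) with hbdef
    have hyE : ((⟨y.1.val, by omega⟩ : Fin (c + (k - c))), y.2) = emR c (k - c) b :=
      Prod.ext (Fin.ext (by simp [emR, hbdef]; omega)) rfl
    rw [hyE, show ((⟨x.1.val, by omega⟩ : Fin (c + (k - c))), x.2) = emL c (k - c) a from rfl]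
    rw [bul_LR (by omega : c ≠ 0) (by omega : k - c ≠ 0), lres_r, rres_r]
    have e1 : ((⟨c + (y.1.val - c), by omega⟩ : Fin k), y.2) = y :=
      Prod.ext (Fin.ext (by simp; omega)) rfl
    have e2 : ((⟨c + 0, by omega⟩ : Fin k), false) = ((⟨c, h2⟩ : Fin k), false) := rfl
    rw [e1, e2]
    · exact key x y hx hy
    all_goals omega
  · -- RL
    have hxv := x.1.2
    have hyv := y.1.2
    set a : Fin (k - c) × Bool := ((⟨x.1.val - c, by omega⟩ : Fin (k - c)), x.2) with hadef
    set b : Fin c × Bool := ((⟨y.1.val, hy⟩ : Fin c), y.2) with hbdef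
    have hxE : ((⟨x.1.val, by omega⟩ : Fin (c + (k - c))), x.2) = emR c (k - c) a :=
      Prod.ext (Fin.ext (by simp [emR, hadef]; omega)) rfl
    rw [hxE, show ((⟨y.1.val, by omega⟩ : Fin (c + (k - c))), y.2) = emL c (k - c) b from rfl]
    have hsymm1 : π.r x y ↔ π.r y x := ⟨π.symm, π.symm⟩
    have hsymm2 : B.r (emR c (k - c) a) (emL c (k - c) b) ↔
        B.r (emL c (k - c) b) (emR c (k - c) a) := ⟨B.symm, B.symm⟩
    rw [hsymm1, hsymm2, bul_LR (by omega : c ≠ 0) (by omega : k - c ≠ 0), lres_r, rres_r]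
    have e1 : ((⟨c + (x.1.val - c), by omega⟩ : Fin k), x.2) = x :=
      Prod.ext (Fin.ext (by simp; omega)) rfl
    have e2 : ((⟨c + 0, by omega⟩ : Fin k), false) = ((⟨c, h2⟩ : Fin k), false) := rfl
    rw [e1, e2]
    · exact key y x hy hx
    all_goals omega
  · -- RR
    have hxv := x.1.2
    have hyv := y.1.2
    set a : Fin (k - c) × Bool := ((⟨x.1.val - c, by omega⟩ : Fin (k - c)), x.2) with hadef
    set b : Fin (k - c) × Bool := ((⟨y.1.val - c, by omega⟩ : Fin (k - c)), y.2) with hbdef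
    have hxE : ((⟨x.1.val, by omega⟩ : Fin (c + (k - c))), x.2) = emR c (k - c) a :=
      Prod.ext (Fin.ext (by simp [emR, hadef]; omega)) rfl
    have hyE : ((⟨y.1.val, by omega⟩ : Fin (c + (k - c))), y.2) = emR c (k - c) b :=
      Prod.ext (Fin.ext (by simp [emR, hbdef]; omega)) rfl
    rw [hxE, hyE, bul_RR (by omega : c ≠ 0) (by omega : k - c ≠ 0), rres_r]
    have e1 : ((⟨c + (x.1.val - c), by omega⟩ : Fin k), x.2) = x :=
      Prod.ext (Fin.ext (by simp; omega)) rfl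
    have e2 : ((⟨c + (y.1.val - c), by omega⟩ : Fin k), y.2) = y :=
      Prod.ext (Fin.ext (by simp; omega)) rfl
    rw [e1, e2]

end Aux4

section Aux5

variable {k : ℕ}

/-- CENT3: transfer of splits to the left restriction. -/
theorem splits_lres (π : DiagramOn k) {jj c : ℕ} (hjk : jj ≤ k) (hj : SplitsAt π jj)
    (hc1 : 0 < c) (hcj : c < jj) :
    SplitsAt π c ↔ SplitsAt (lres π jj hjk) c := by
  obtain ⟨hj1, hjk2, hpqj, hcrj⟩ := hj
  constructor
  · rintro ⟨h1, h2, hpq, hcr⟩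
    refine ⟨hc1, hcj, hpq, ?_⟩
    intro a b ha hb hab
    exact hcr ((⟨a.1.val, by have := a.1.2; omega⟩ : Fin k), a.2)
      ((⟨b.1.val, by have := b.1.2; omega⟩ : Fin k), b.2) ha hb hab
  · rintro ⟨h1', h2, hpq, hcr⟩
    refine ⟨hc1, by omega, hpq, ?_⟩
    intro x y hx hyc hxy
    rcases lt_or_ge y.1.val jj with hyj | hyj
    · exact hcr ((⟨x.1.val, by omega⟩ : Fin jj), x.2) ((⟨y.1.val, hyj⟩ : Fin jj), y.2)
        hx hyc hxy
    · have h3 : π.r x ((⟨jj - 1, by omega⟩ : Fin k), false) := hcrj x y (by omega) hyj hxy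
      exact hcr ((⟨x.1.val, by omega⟩ : Fin jj), x.2) ((⟨jj - 1, by omega⟩ : Fin jj), false)
        hx (by simp; omega) h3

/-- CENT4: transfer of splits to the right restriction. -/
theorem splits_rres (π : DiagramOn k) {jj c : ℕ} (hjk : jj ≤ k) (hj : SplitsAt π jj)
    (hcj : jj < c) (hck : c < k) :
    SplitsAt π c ↔ SplitsAt (rres π jj hjk) (c - jj) := by
  obtain ⟨hj1, hjk2, hpqj, hcrj⟩ := hj
  have e1 : ((⟨jj + (c - jj - 1), by omega⟩ : Fin k), false) =
      ((⟨c - 1, by omega⟩ : Fin k), (false : Bool)) :=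
    Prod.ext (Fin.ext (by simp; omega)) rfl
  have e2 : ((⟨jj + (c - jj), by omega⟩ : Fin k), false) =
      ((⟨c, hck⟩ : Fin k), (false : Bool)) :=
    Prod.ext (Fin.ext (by simp; omega)) rfl
  have e0 : ((⟨jj + 0, by omega⟩ : Fin k), false) =
      ((⟨jj, by omega⟩ : Fin k), (false : Bool)) := rfl
  constructor
  · rintro ⟨h1, h2, hpq, hcr⟩
    refine ⟨by omega, by omega, ?_, ?_⟩
    · rw [rres_r π jj hjk, e1, e2]
      exact hpq
    · intro a b ha hb hab
      rw [rres_r π jj hjk, e1]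
      exact hcr ((⟨jj + a.1.val, by have := a.1.2; omega⟩ : Fin k), a.2)
        ((⟨jj + b.1.val, by have := b.1.2; omega⟩ : Fin k), b.2) (by simp; omega)
        (by simp; omega) hab
  · rintro ⟨h1', hlt, hpq', hcr'⟩
    refine ⟨by omega, hck, ?_, ?_⟩
    · rw [← e1, ← e2]
      have := hpq'
      rw [rres_r π jj hjk] at this
      exact this
    · intro x y hx hy hxy
      have hyv := y.1.2
      have hyE : y = ((⟨jj + (y.1.val - jj), by omega⟩ : Fin k), y.2) :=
        Prod.ext (Fin.ext (by simp; omega)) rfl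
      rcases lt_or_ge x.1.val jj with hxj | hxj
      · have h3 : π.r x ((⟨jj - 1, by omega⟩ : Fin k), false) :=
          hcrj x y hxj (by omega) hxy
        have h4 : π.r ((⟨jj, by omega⟩ : Fin k), false) y :=
          π.trans (π.symm hpqj) (π.trans (π.symm h3) hxy)
        rw [hyE] at h4
        have h5 := hcr' ((⟨0, by omega⟩ : Fin (k - jj)), false)
          ((⟨y.1.val - jj, by omega⟩ : Fin (k - jj)), y.2) (by simp; omega) (by simp; omega) h4
        rw [rres_r π jj hjk, e0, e1] at h5
        exact π.trans h3 (π.trans hpqj h5)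
      · have hxv := x.1.2
        have hxE : x = ((⟨jj + (x.1.val - jj), by omega⟩ : Fin k), x.2) :=
          Prod.ext (Fin.ext (by simp; omega)) rfl
        rw [hxE] at hxy
        rw [hyE] at hxy
        have h5 := hcr' ((⟨x.1.val - jj, by omega⟩ : Fin (k - jj)), x.2)
          ((⟨y.1.val - jj, by omega⟩ : Fin (k - jj)), y.2) (by simp; omega) (by simp; omega) hxy
        rw [rres_r π jj hjk, e1] at h5
        rw [hxE]
        exact h5

end Aux5

section Aux6

/-- A diagram splits at `c`. -/
def Diagram.Splits (π : Diagram) (c : ℕ) : Prop := SplitsAt π.2 c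

theorem bullet_fst {d₁ d₂ : Diagram} (h1 : d₁.1 ≠ 0) (h2 : d₂.1 ≠ 0) :
    (d₁.bullet d₂).1 = d₁.1 + d₂.1 := by
  rw [Diagram.bullet, dif_neg h1, dif_neg h2]

theorem bullet_fst_ne {d₁ d₂ : Diagram} (h1 : d₁.1 ≠ 0) : (d₁.bullet d₂).1 ≠ 0 := by
  rw [Diagram.bullet, dif_neg h1]
  split_ifs with h
  · exact h1
  · simp only []
    omega

theorem foldl_fst_ne : ∀ (l : List Diagram) (d : Diagram), d.1 ≠ 0 →
    (l.foldl Diagram.bullet d).1 ≠ 0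
  | [], d, hd => hd
  | e :: t, d, hd => by
    simpa using foldl_fst_ne t (d.bullet e) (bullet_fst_ne hd)

theorem listBullet_ne_nil {l : List Diagram} {π : Diagram} (h : Diagram.listBullet l = π)
    (hπ : π.1 ≠ 0) : l ≠ [] := by
  rintro rfl
  rw [← h] at hπ
  exact hπ rfl

theorem listBullet_fst_ne {l : List Diagram} (hne : l ≠ [])
    (h : ∀ d ∈ l, d.1 ≠ 0) : (Diagram.listBullet l).1 ≠ 0 := by
  cases l with
  | nil => exact absurd rfl hne
  | cons d t => exact foldl_fst_ne t d (h d (by simp))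

theorem listBullet_append_singleton {l : List Diagram} (hne : l ≠ []) (θ : Diagram) :
    Diagram.listBullet (l ++ [θ]) = (Diagram.listBullet l).bullet θ := by
  cases l with
  | nil => exact absurd rfl hne
  | cons d t =>
    show List.foldl Diagram.bullet d (t ++ [θ]) = _
    rw [List.foldl_append]
    rfl

/-- Diagram-level reconstruction: a split yields a bullet factorization. -/
theorem splits_factor (π : Diagram) (c : ℕ) (hck : c ≤ π.1) (hs : Diagram.Splits π c) :
    π = Diagram.bullet ⟨c, lres π.2 c hck⟩ ⟨π.1 - c, rres π.2 c hck⟩ :=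
  splits_bullet π.2 c hck hs

/-- Diagram-level CENT2. -/
theorem factor_core {σ θ π : Diagram} (hσ : σ.1 ≠ 0) (hθ : θ.1 ≠ 0)
    (h : π = σ.bullet θ) :
    Diagram.Splits π σ.1 ∧
      σ = ⟨σ.1, lres (bulSet σ.2 θ.2 hσ hθ) σ.1 (by omega)⟩ ∧
      θ = ⟨σ.1 + θ.1 - σ.1, rres (bulSet σ.2 θ.2 hσ hθ) σ.1 (by omega)⟩ := by
  obtain ⟨j, s⟩ := σ
  obtain ⟨m, t⟩ := θ
  have hb : Diagram.bullet ⟨j, s⟩ ⟨m, t⟩ = ⟨j + m, bulSet s t hσ hθ⟩ := bullet_mk hσ hθ s t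
  have core := bullet_eq_core hσ hθ s t (bulSet s t hσ hθ) hb
  subst h
  rw [hb]
  exact ⟨core.1, core.2.1, core.2.2⟩

/-- Bullet-irreducibility is equivalent to having no splits. -/
theorem irr_iff_no_splits (π : Diagram) (hπ : π.1 ≠ 0) :
    π.BulletIrr ↔ ∀ c, ¬ Diagram.Splits π c := by
  constructor
  · rintro ⟨-, hnred⟩ c hs
    obtain ⟨h1, h2, -, -⟩ := id hs
    refine hnred ⟨⟨c, lres π.2 c h2.le⟩, ⟨π.1 - c, rres π.2 c h2.le⟩,
      (show c ≠ 0 by omega), (show π.1 - c ≠ 0 by omega), ?_⟩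
    exact splits_factor π c h2.le hs
  · intro hns
    refine ⟨hπ, ?_⟩
    rintro ⟨σ, θ, h1, h2, heq⟩
    exact hns σ.1 (factor_core h1 h2 heq).1

/-- The left factor order of a bullet factorization with irreducible right factor is
the greatest split position. -/
theorem factor_last {π σ θ : Diagram} (hσ : σ.1 ≠ 0) (hθ : θ.1 ≠ 0)
    (h : π = σ.bullet θ) :
    Diagram.Splits π σ.1 ∧
      (θ.BulletIrr → ∀ c, σ.1 < c → ¬ Diagram.Splits π c) := by
  obtain ⟨hsp, hσeq, hθeq⟩ := factor_core hσ hθ h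
  have hord : π.1 = σ.1 + θ.1 := by rw [h, bullet_fst hσ hθ]
  refine ⟨hsp, ?_⟩
  intro hirr c hc hs
  have hcπ : c < π.1 := by
    obtain ⟨-, h2, -, -⟩ := hs
    exact h2
  -- transfer the split to θ
  have hπB : π = ⟨σ.1 + θ.1, bulSet σ.2 θ.2 hσ hθ⟩ := by
    rw [h]
    obtain ⟨j, s⟩ := σ
    obtain ⟨m, t⟩ := θ
    exact bullet_mk hσ hθ s t
  have hsB : SplitsAt (bulSet σ.2 θ.2 hσ hθ) c := by
    rw [hπB] at hs
    exact hs
  have hspB : SplitsAt (bulSet σ.2 θ.2 hσ hθ) σ.1 := by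
    rw [hπB] at hsp
    exact hsp
  have htrans := (splits_rres (bulSet σ.2 θ.2 hσ hθ) (by omega) hspB hc (by omega)).mp hsB
  have : Diagram.Splits θ (c - σ.1) := by
    rw [hθeq]
    exact htrans
  exact (irr_iff_no_splits θ hθ).mp hirr (c - σ.1) this

/-- Uniqueness of bullet factorizations with a prescribed left order. -/
theorem factor_unique {σ₁ θ₁ σ₂ θ₂ : Diagram} (hσ₁ : σ₁.1 ≠ 0) (hθ₁ : θ₁.1 ≠ 0)
    (hσ₂ : σ₂.1 ≠ 0) (hθ₂ : θ₂.1 ≠ 0) (hfst : σ₁.1 = σ₂.1)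
    (heq : σ₁.bullet θ₁ = σ₂.bullet θ₂) : σ₁ = σ₂ ∧ θ₁ = θ₂ := by
  obtain ⟨h1, hσe1, hθe1⟩ := factor_core hσ₁ hθ₁ (rfl : σ₁.bullet θ₁ = σ₁.bullet θ₁)
  obtain ⟨h2, hσe2, hθe2⟩ := factor_core hσ₂ hθ₂ heq
  obtain ⟨j₁, s₁⟩ := σ₁
  obtain ⟨m₁, t₁⟩ := θ₁
  obtain ⟨j₂, s₂⟩ := σ₂
  obtain ⟨m₂, t₂⟩ := θ₂
  simp only at hfst
  subst hfst
  have hm : m₁ = m₂ := by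
    have h3 := congrArg Sigma.fst heq
    rw [bullet_fst hσ₁ hθ₁, bullet_fst hσ₂ hθ₂] at h3
    simpa using h3
  subst hm
  have hB : bulSet s₁ t₁ hσ₁ hθ₁ = bulSet s₂ t₂ hσ₂ hθ₂ := by
    have h4 := (bullet_mk hσ₁ hθ₁ s₁ t₁).symm.trans (heq.trans (bullet_mk hσ₂ hθ₂ s₂ t₂))
    simpa using h4
  rw [hB] at hσe1 hθe1
  exact ⟨hσe1.trans hσe2.symm, hθe1.trans hθe2.symm⟩

end Aux6

section Main

/-- Existence of a factorization into bullet-irreducibles. -/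
theorem exists_bullet_fact : ∀ k : ℕ, ∀ π : Diagram, π.1 = k → π.1 ≠ 0 →
    ∃ l : List Diagram, (∀ d ∈ l, d.BulletIrr) ∧ Diagram.listBullet l = π := by
  intro k
  induction k using Nat.strong_induction_on with
  | _ k ih =>
    intro π hk hπ
    classical
    by_cases hs : ∃ c, Diagram.Splits π c
    · obtain ⟨c₀, hc₀⟩ := hs
      have hb₀ : c₀ ≤ π.1 - 1 := by
        obtain ⟨h1, h2, -, -⟩ := hc₀
        omega
      set c := Nat.findGreatest (fun c => Diagram.Splits π c) (π.1 - 1) with hcdef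
      have hc : Diagram.Splits π c := Nat.findGreatest_spec hb₀ hc₀
      have hmax : ∀ c', c < c' → c' ≤ π.1 - 1 → ¬ Diagram.Splits π c' := by
        intro c' h1 h2
        exact Nat.findGreatest_is_greatest h1 h2
      obtain ⟨hc1, hc2, -, -⟩ := id hc
      set σ : Diagram := ⟨c, lres π.2 c hc2.le⟩ with hσdef
      set θ : Diagram := ⟨π.1 - c, rres π.2 c hc2.le⟩ with hθdef
      have hfac : π = σ.bullet θ := splits_factor π c hc2.le hc
      have hθirr : θ.BulletIrr := by
        rw [irr_iff_no_splits θ (show π.1 - c ≠ 0 by omega)]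
        intro c' hsp
        obtain ⟨hc'1, hc'2, -, -⟩ := id hsp
        have hc'2' : c' < π.1 - c := hc'2
        have hsp' : SplitsAt (rres π.2 c hc2.le) (c + c' - c) := by
          rw [show c + c' - c = c' by omega]
          exact hsp
        have hspπ : Diagram.Splits π (c + c') :=
          (splits_rres π.2 hc2.le hc (by omega) (by omega)).mpr hsp'
        exact hmax (c + c') (by omega) (by omega) hspπ
      obtain ⟨l, hlirr, hlb⟩ := ih c (by omega) σ rfl (show c ≠ 0 by omega)
      have hlne : l ≠ [] := listBullet_ne_nil hlb (show c ≠ 0 by omega)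
      refine ⟨l ++ [θ], ?_, ?_⟩
      · intro d hd
        rcases List.mem_append.mp hd with h | h
        · exact hlirr d h
        · rw [List.mem_singleton.mp h]
          exact hθirr
      · rw [listBullet_append_singleton hlne, hlb]
        exact hfac.symm
    · push_neg at hs
      refine ⟨[π], ?_, rfl⟩
      intro d hd
      rw [List.mem_singleton.mp hd]
      exact (irr_iff_no_splits π hπ).mpr hs

/-- Uniqueness of the factorization into bullet-irreducibles. -/
theorem unique_bullet_fact : ∀ k : ℕ, ∀ π : Diagram, π.1 = k → π.1 ≠ 0 →
    ∀ l₁ l₂ : List Diagram, (∀ d ∈ l₁, d.BulletIrr) → Diagram.listBullet l₁ = π →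
      (∀ d ∈ l₂, d.BulletIrr) → Diagram.listBullet l₂ = π → l₁ = l₂ := by
  intro k
  induction k using Nat.strong_induction_on with
  | _ k ih =>
    intro π hk hπ l₁ l₂ hirr₁ hlb₁ hirr₂ hlb₂
    have hne₁ : l₁ ≠ [] := listBullet_ne_nil hlb₁ hπ
    have hne₂ : l₂ ≠ [] := listBullet_ne_nil hlb₂ hπ
    rcases l₁.eq_nil_or_concat' with rfl | ⟨r₁, θ₁, rfl⟩
    · exact absurd rfl hne₁
    rcases l₂.eq_nil_or_concat' with rfl | ⟨r₂, θ₂, rfl⟩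
    · exact absurd rfl hne₂
    have hθ₁irr : θ₁.BulletIrr := hirr₁ θ₁ (by simp)
    have hθ₂irr : θ₂.BulletIrr := hirr₂ θ₂ (by simp)
    -- a helper: a list with nonempty prefix gives a split with maximality
    rcases List.eq_nil_or_concat' r₁ with rfl | ⟨L₁, b₁, hr₁ne⟩ <;>
      rcases List.eq_nil_or_concat' r₂ with rfl | ⟨L₂, b₂, hr₂ne⟩
    · -- both singletons
      simp only [List.nil_append] at hlb₁ hlb₂
      rw [show Diagram.listBullet [θ₁] = θ₁ from rfl] at hlb₁
      rw [show Diagram.listBullet [θ₂] = θ₂ from rfl] at hlb₂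
      rw [hlb₁, hlb₂]
    · -- l₁ singleton, l₂ not: contradiction
      exfalso
      have hr₂ne' : r₂ ≠ [] := by rw [hr₂ne]; simp
      simp only [List.nil_append] at hlb₁
      rw [show Diagram.listBullet [θ₁] = θ₁ from rfl] at hlb₁
      have hσ₂ : (Diagram.listBullet r₂).1 ≠ 0 :=
        listBullet_fst_ne hr₂ne' (fun d hd => (hirr₂ d (by simp [hd])).1)
      have hfac : π = (Diagram.listBullet r₂).bullet θ₂ := by
        rw [← hlb₂, listBullet_append_singleton hr₂ne']
      have hsp := (factor_last hσ₂ hθ₂irr.1 hfac).1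
      exact ((irr_iff_no_splits π hπ).mp (hlb₁ ▸ hθ₁irr)) _ hsp
    · -- l₂ singleton, l₁ not
      exfalso
      have hr₁ne' : r₁ ≠ [] := by rw [hr₁ne]; simp
      simp only [List.nil_append] at hlb₂
      rw [show Diagram.listBullet [θ₂] = θ₂ from rfl] at hlb₂
      have hσ₁ : (Diagram.listBullet r₁).1 ≠ 0 :=
        listBullet_fst_ne hr₁ne' (fun d hd => (hirr₁ d (by simp [hd])).1)
      have hfac : π = (Diagram.listBullet r₁).bullet θ₁ := by
        rw [← hlb₁, listBullet_append_singleton hr₁ne']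
      have hsp := (factor_last hσ₁ hθ₁irr.1 hfac).1
      exact ((irr_iff_no_splits π hπ).mp (hlb₂ ▸ hθ₂irr)) _ hsp
    · -- both have nonempty prefixes
      have hr₁ne' : r₁ ≠ [] := by rw [hr₁ne]; simp
      have hr₂ne' : r₂ ≠ [] := by rw [hr₂ne]; simp
      set σ₁ := Diagram.listBullet r₁ with hσ₁def
      set σ₂ := Diagram.listBullet r₂ with hσ₂def
      have hσ₁ : σ₁.1 ≠ 0 :=
        listBullet_fst_ne hr₁ne' (fun d hd => (hirr₁ d (by simp [hd])).1)
      have hσ₂ : σ₂.1 ≠ 0 :=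
        listBullet_fst_ne hr₂ne' (fun d hd => (hirr₂ d (by simp [hd])).1)
      have hfac₁ : π = σ₁.bullet θ₁ := by
        rw [← hlb₁, hσ₁def, listBullet_append_singleton hr₁ne']
      have hfac₂ : π = σ₂.bullet θ₂ := by
        rw [← hlb₂, hσ₂def, listBullet_append_singleton hr₂ne']
      obtain ⟨hsp₁, hmax₁⟩ := factor_last hσ₁ hθ₁irr.1 hfac₁
      obtain ⟨hsp₂, hmax₂⟩ := factor_last hσ₂ hθ₂irr.1 hfac₂
      have hcc : σ₁.1 = σ₂.1 := by
        rcases lt_trichotomy σ₁.1 σ₂.1 with h | h | h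
        · exact absurd hsp₂ (hmax₁ hθ₁irr _ h)
        · exact h
        · exact absurd hsp₁ (hmax₂ hθ₂irr _ h)
      obtain ⟨hσeq, hθeq⟩ := factor_unique hσ₁ hθ₁irr.1 hσ₂ hθ₂irr.1 hcc
        (hfac₁.symm.trans hfac₂)
      have hordσ : σ₁.1 < k := by
        obtain ⟨-, h2, -, -⟩ := hsp₁
        omega
      have hreq : r₁ = r₂ := by
        refine ih σ₁.1 hordσ σ₁ rfl hσ₁ r₁ r₂ ?_ rfl ?_ ?_
        · exact fun d hd => hirr₁ d (by simp [hd])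
        · exact fun d hd => hirr₂ d (by simp [hd])
        · exact hσ₂def.symm.trans hσeq.symm
      rw [hreq, hθeq]

end Main

/-- Every nonempty partition diagram admits a unique decomposition as a
`•`-product of nonempty `•`-irreducible partition diagrams. -/
theorem unique_bullet_factorization (π : Diagram) (hπ : π.1 ≠ 0) :
    ∃! l : List Diagram, (∀ d ∈ l, d.BulletIrr) ∧ Diagram.listBullet l = π := by
  obtain ⟨l, hlirr, hlb⟩ := exists_bullet_fact π.1 π rfl hπ
  exact ⟨l, ⟨hlirr, hlb⟩, fun l' ⟨hl'irr, hl'b⟩ =>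
    unique_bullet_fact π.1 π rfl hπ l' l hl'irr hl'b hlirr hlb⟩
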